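/- Let F : ℝ^n → ℝ be any function and φ : ℝ^n → ℝ be convex and differentiable, let μ > 0, and suppose that either F is μ-strongly convex or φ is μ-strongly convex. Fix x₀ ∈ ℝ^n and suppose x⁺ is a global minimizer of the map x ↦ F(x) + Δ_φ(x, x₀). Then F(x⁺) ≤ F(x₀) − (μ/2)‖x⁺ − x₀‖². -/

import Mathlib

open RealInnerProductSpace

noncomputable section

/-- Euclidean space `ℝ^n`. -/
abbrev Eu (n : ℕ) := EuclideanSpace ℝ (Fin n)

/-- The Bregman distance `Δ_φ(u,v) = φ(u) − φ(v) − ⟨∇φ(v), u−v⟩` associated with a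
differentiable function `φ` whose gradient is `φ'`. -/
def Breg {n : ℕ} (φ : Eu n → ℝ) (φ' : Eu n → Eu n) (u v : Eu n) : ℝ :=
  φ u - φ v - ⟪φ' v, u - v⟫

/-- `F` is `μ`-strongly convex iff `F − (μ/2)‖·‖²` is convex. -/
def StrongConvex {n : ℕ} (μ : ℝ) (F : Eu n → ℝ) : Prop :=
  ConvexOn ℝ Set.univ (fun u => F u - μ / 2 * ‖u‖ ^ 2)

/-- combination of points along a segment -/
lemma combo_eq {n : ℕ} (v d : Eu n) (a b s t : ℝ) (hab : a + b = 1) :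
    v + (a * s + b * t) • d = a • (v + s • d) + b • (v + t • d) := by
  have h : a • v + b • v = v := by rw [← add_smul, hab, one_smul]
  rw [smul_add, smul_add, add_smul, smul_smul, smul_smul]
  conv_lhs => rw [← h]
  abel

/-- convexity restricted to a line -/
lemma convexOn_line {n : ℕ} {ψ : Eu n → ℝ} (h : ConvexOn ℝ Set.univ ψ) (v d : Eu n) :
    ConvexOn ℝ Set.univ (fun t : ℝ => ψ (v + t • d)) := by
  refine ⟨convex_univ, fun s _ t _ a b ha hb hab => ?_⟩
  have := h.2 (Set.mem_univ (v + s • d)) (Set.mem_univ (v + t • d)) ha hb hab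
  simpa [smul_eq_mul, combo_eq v d a b s t hab] using this

/-- key directional inequality for convex functions -/
lemma key_ineq {n : ℕ} {ψ : Eu n → ℝ} (hconv : ConvexOn ℝ Set.univ ψ) (u v : Eu n) (c : ℝ)
    (hder : HasDerivAt (fun t : ℝ => ψ (v + t • (u - v))) c 0) :
    ψ v + c ≤ ψ u := by
  have h1 := (convexOn_line hconv v (u - v)).le_slope_of_hasDerivAt
    (Set.mem_univ (0:ℝ)) (Set.mem_univ (1:ℝ)) zero_lt_one hder
  rw [slope_def_field] at h1
  simp at h1
  linarith

/-- derivative of the line map -/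
lemma line_hasDerivAt {n : ℕ} (v d : Eu n) :
    HasDerivAt (fun t : ℝ => v + t • d) d 0 := by
  simpa using ((hasDerivAt_id (0:ℝ)).smul_const d).const_add v

/-- directional derivative of φ via its gradient -/
lemma phi_line_deriv {n : ℕ} {φ : Eu n → ℝ} {g : Eu n} {v : Eu n}
    (hg : HasGradientAt φ g v) (d : Eu n) :
    HasDerivAt (fun t : ℝ => φ (v + t • d)) ⟪g, d⟫ 0 := by
  have hf : HasFDerivAt φ ((InnerProductSpace.toDual ℝ (Eu n)) g) ((fun t : ℝ => v + t • d) 0) := by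
    simpa using hasGradientAt_iff_hasFDerivAt.mp hg
  have := hf.comp_hasDerivAt 0 (line_hasDerivAt v d)
  simpa [InnerProductSpace.toDual_apply_apply, Function.comp_def] using this

/-- derivative of the quadratic along the line -/
lemma quad_line_deriv {n : ℕ} (μ : ℝ) (v d : Eu n) :
    HasDerivAt (fun t : ℝ => μ / 2 * ‖v + t • d‖ ^ 2) (μ * ⟪v, d⟫) 0 := by
  have hexp : ∀ t : ℝ, μ / 2 * ‖v + t • d‖ ^ 2
      = μ / 2 * ‖v‖ ^ 2 + (μ * ⟪v, d⟫) * t + (μ / 2 * ‖d‖ ^ 2) * t ^ 2 := by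
    intro t
    have h1 : ‖v + t • d‖ ^ 2 = ⟪v + t • d, v + t • d⟫ := (real_inner_self_eq_norm_sq _).symm
    have h2 : ‖v‖ ^ 2 = ⟪v, v⟫ := (real_inner_self_eq_norm_sq _).symm
    have h3 : ‖d‖ ^ 2 = ⟪d, d⟫ := (real_inner_self_eq_norm_sq _).symm
    rw [h1, h2, h3]
    simp only [inner_add_left, inner_add_right, real_inner_smul_left, real_inner_smul_right,
      real_inner_comm d v]
    ring
  have hpoly : HasDerivAt (fun t : ℝ => μ / 2 * ‖v‖ ^ 2 + (μ * ⟪v, d⟫) * t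
      + (μ / 2 * ‖d‖ ^ 2) * t ^ 2) (μ * ⟪v, d⟫) 0 := by
    have := (((hasDerivAt_id (0:ℝ)).const_mul (μ * ⟪v, d⟫)).const_add (μ / 2 * ‖v‖ ^ 2)).add
      ((hasDerivAt_pow 2 (0:ℝ)).const_mul (μ / 2 * ‖d‖ ^ 2))
    simpa [Pi.add_def] using this
  exact hpoly.congr_of_eventuallyEq (Filter.Eventually.of_forall hexp)

/-- norm identity for convex combinations -/
lemma combo_norm {n : ℕ} (x y : Eu n) (a b : ℝ) (hab : a + b = 1) :
    a * ‖x‖ ^ 2 + b * ‖y‖ ^ 2 - ‖a • x + b • y‖ ^ 2 = a * b * ‖x - y‖ ^ 2 := by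
  have h1 : ‖a • x + b • y‖ ^ 2 = ⟪a • x + b • y, a • x + b • y⟫ :=
    (real_inner_self_eq_norm_sq _).symm
  have h2 : ‖x‖ ^ 2 = ⟪x, x⟫ := (real_inner_self_eq_norm_sq _).symm
  have h3 : ‖y‖ ^ 2 = ⟪y, y⟫ := (real_inner_self_eq_norm_sq _).symm
  have h4 : ‖x - y‖ ^ 2 = ⟪x - y, x - y⟫ := (real_inner_self_eq_norm_sq _).symm
  rw [h1, h2, h3, h4]
  simp only [inner_add_left, inner_add_right, inner_sub_left, inner_sub_right,
    real_inner_smul_left, real_inner_smul_right, real_inner_comm y x]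
  linear_combination (-(a * (⟪x, x⟫ : ℝ)) - b * (⟪y, y⟫ : ℝ)) * hab

/-- the Bregman distance in its first argument is convex -/
lemma breg_convex {n : ℕ} {φ : Eu n → ℝ} (φ' : Eu n → Eu n) (x₀ : Eu n)
    (hφ : ConvexOn ℝ Set.univ φ) :
    ConvexOn ℝ Set.univ (fun u => Breg φ φ' u x₀) := by
  refine ⟨convex_univ, fun x _ y _ a b ha hb hab => ?_⟩
  have hc := hφ.2 (Set.mem_univ x) (Set.mem_univ y) ha hb hab
  simp only [smul_eq_mul] at hc
  simp only [Breg, smul_eq_mul, inner_sub_right, inner_add_right,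
    real_inner_smul_right]
  have heq : a * (φ x - φ x₀ - (⟪φ' x₀, x⟫ - ⟪φ' x₀, x₀⟫))
      + b * (φ y - φ x₀ - (⟪φ' x₀, y⟫ - ⟪φ' x₀, x₀⟫))
      - (φ (a • x + b • y) - φ x₀ - (a * ⟪φ' x₀, x⟫ + b * ⟪φ' x₀, y⟫ - ⟪φ' x₀, x₀⟫))
      = a * φ x + b * φ y - φ (a • x + b • y) := by
    linear_combination (⟪φ' x₀, x₀⟫ - φ x₀) * hab
  linarith [hc, heq]

/-- nonnegativity of Bregman distance -/
lemma breg_nonneg {n : ℕ} {φ : Eu n → ℝ} {φ' : Eu n → Eu n} (u v : Eu n)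
    (hφ : ConvexOn ℝ Set.univ φ) (hg : HasGradientAt φ (φ' v) v) :
    0 ≤ Breg φ φ' u v := by
  have := key_ineq hφ u v ⟪φ' v, u - v⟫ (phi_line_deriv hg (u - v))
  simp only [Breg]; linarith

/-- sufficient decrease of a Bregman proximal step: if `x⁺` globally
minimizes `x ↦ F(x) + Δ_φ(x,x₀)` and either `F` or `φ` is `μ`-strongly convex, then
`F(x⁺) ≤ F(x₀) − (μ/2)‖x⁺−x₀‖²`. -/
theorem breg_prox_descent {n : ℕ} (F φ : Eu n → ℝ) (φ' : Eu n → Eu n) (μ : ℝ)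
    (hμ : 0 < μ)
    (hφ_conv : ConvexOn ℝ Set.univ φ) (hφ_grad : ∀ v, HasGradientAt φ (φ' v) v)
    (hsc : StrongConvex μ F ∨ StrongConvex μ φ)
    (x₀ xp : Eu n)
    (hmin : ∀ ξ : Eu n, F xp + Breg φ φ' xp x₀ ≤ F ξ + Breg φ φ' ξ x₀) :
    F xp ≤ F x₀ - μ / 2 * ‖xp - x₀‖ ^ 2 := by
  have hB0 : Breg φ φ' x₀ x₀ = 0 := by simp [Breg]
  rcases hsc with hF | hφs
  · -- F strongly convex: G = F + Breg(·,x₀) is μ-strongly convex.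
    set G : Eu n → ℝ := fun u => F u + Breg φ φ' u x₀ with hG
    have hHconv : ConvexOn ℝ Set.univ (fun u => G u - μ / 2 * ‖u‖ ^ 2) := by
      have := hF.add (breg_convex φ' x₀ hφ_conv)
      refine this.congr fun u _ => ?_
      simp [hG]; ring
    -- for each t ∈ (0,1): G xp ≤ G x₀ - μ/2 (1-t) ‖xp - x₀‖²
    have hkey : ∀ t : ℝ, 0 < t → t < 1 →
        G xp ≤ G x₀ - μ / 2 * (1 - t) * ‖xp - x₀‖ ^ 2 := by
      intro t ht0 ht1
      have ha0 : (0:ℝ) ≤ 1 - t := by linarith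
      have hb0 : 0 ≤ t := le_of_lt ht0
      have hab : (1 - t) + t = 1 := by ring
      have hH := hHconv.2 (Set.mem_univ xp) (Set.mem_univ x₀) ha0 hb0 hab
      simp only [smul_eq_mul] at hH
      have hnorm := combo_norm xp x₀ (1 - t) t hab
      have hnormμ : μ / 2 * ((1 - t) * ‖xp‖ ^ 2 + t * ‖x₀‖ ^ 2
            - ‖(1 - t) • xp + t • x₀‖ ^ 2)
          = μ / 2 * ((1 - t) * t * ‖xp - x₀‖ ^ 2) := by rw [hnorm]
      have hmin' := hmin ((1 - t) • xp + t • x₀)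
      have hGξ : F ((1 - t) • xp + t • x₀) + Breg φ φ' ((1 - t) • xp + t • x₀) x₀
          = G ((1 - t) • xp + t • x₀) := by simp [hG]
      rw [hGξ] at hmin'
      have hGxp : F xp + Breg φ φ' xp x₀ = G xp := by simp [hG]
      rw [hGxp] at hmin'
      have h5 : t * G xp ≤ t * (G x₀ - μ / 2 * (1 - t) * ‖xp - x₀‖ ^ 2) := by
        nlinarith [hmin', hH, hnormμ]
      exact le_of_mul_le_mul_left h5 ht0
    -- pass to the limit t → 0
    have hGineq : G xp ≤ G x₀ - μ / 2 * ‖xp - x₀‖ ^ 2 := by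
      have : ∀ ε > 0, G xp ≤ (G x₀ - μ / 2 * ‖xp - x₀‖ ^ 2) + ε := by
        intro ε hε
        set M := μ / 2 * ‖xp - x₀‖ ^ 2 + 1 with hM
        have hM0 : 0 < M := by positivity
        set t := min (1/2 : ℝ) (ε / M) with htdef
        have ht0 : 0 < t := lt_min (by norm_num) (div_pos hε hM0)
        have ht1 : t < 1 := lt_of_le_of_lt (min_le_left _ _) (by norm_num)
        have htε : t * M ≤ ε := by
          have h7 : t ≤ ε / M := min_le_right _ _
          calc t * M ≤ (ε / M) * M := mul_le_mul_of_nonneg_right h7 hM0.le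
            _ = ε := by field_simp
        rw [hM] at htε
        have h8 := hkey t ht0 ht1
        have h9 : (0:ℝ) ≤ t * (μ / 2 * ‖xp - x₀‖ ^ 2) :=
          mul_nonneg ht0.le (by positivity)
        nlinarith [h8, htε, ht0.le, h9]
      linarith [le_of_forall_pos_le_add this]
    have hBnn : 0 ≤ Breg φ φ' xp x₀ := breg_nonneg xp x₀ hφ_conv (hφ_grad x₀)
    have hGx₀ : G x₀ = F x₀ := by simp [hG, hB0]
    have : F xp ≤ G xp := by simp [hG]; linarith
    rw [hGx₀] at hGineq; linarith
  · -- φ strongly convex: Breg(xp,x₀) ≥ μ/2 ‖xp - x₀‖²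
    have hψder : HasDerivAt (fun t : ℝ => φ (x₀ + t • (xp - x₀)) -
        μ / 2 * ‖x₀ + t • (xp - x₀)‖ ^ 2) (⟪φ' x₀, xp - x₀⟫ - μ * ⟪x₀, xp - x₀⟫) 0 :=
      (phi_line_deriv (hφ_grad x₀) (xp - x₀)).sub (quad_line_deriv μ x₀ (xp - x₀))
    have hk := key_ineq hφs xp x₀ (⟪φ' x₀, xp - x₀⟫ - μ * ⟪x₀, xp - x₀⟫) hψder
    -- expand: need ‖xp‖² - ‖x₀‖² - 2⟪x₀, xp - x₀⟫ = ‖xp - x₀‖²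
    have hexp : ‖xp‖ ^ 2 - ‖x₀‖ ^ 2 - 2 * ⟪x₀, xp - x₀⟫ = ‖xp - x₀‖ ^ 2 := by
      have h1 : ‖xp‖ ^ 2 = ⟪xp, xp⟫ := (real_inner_self_eq_norm_sq _).symm
      have h2 : ‖x₀‖ ^ 2 = ⟪x₀, x₀⟫ := (real_inner_self_eq_norm_sq _).symm
      have h3 : ‖xp - x₀‖ ^ 2 = ⟪xp - x₀, xp - x₀⟫ := (real_inner_self_eq_norm_sq _).symm
      rw [h1, h2, h3]
      simp only [inner_sub_left, inner_sub_right, real_inner_comm x₀ xp]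
      ring
    have hBreg : μ / 2 * ‖xp - x₀‖ ^ 2 ≤ Breg φ φ' xp x₀ := by
      simp only [Breg]; nlinarith [hk, hexp]
    have := hmin x₀
    rw [hB0] at this
    linarith
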